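/- Let A, B : ℕ × ℕ → ℝ be finitely supported functions satisfying A(k1,k2) = Σ_{t1,t2} B(t1,t2) · (t2 choose k2) · Σ_{0≤s≤t2-k2} (t2-k2 choose s)(t1 choose k1-s) for all k1,k2 (where binomial coefficients vanish outside their range). Then their bivariate generating polynomials satisfy F_A(z1,z2) = F_B(z1+1, z1+z2+1), where F_A(z1,z2) = Σ A(k1,k2) z1^{k1} z2^{k2} and F_B likewise. -/
import Mathlib

open Finset

private lemma geom_ext (t N : ℕ) (h : t < N) (z : ℝ) :
    ∑ j ∈ Finset.range N, (t.choose j : ℝ) * z ^ j = (z + 1) ^ t := by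
  rw [add_pow, ← Finset.sum_subset (Finset.range_subset_range.2 h)]
  · exact Finset.sum_congr rfl fun i hi => by ring
  · intro i _ hi
    simp only [Finset.mem_range, not_lt] at hi
    rw [Nat.choose_eq_zero_of_lt hi]
    simp

private lemma ie_inner_sum (t1 m N : ℕ) (h : t1 + m < N) (z1 : ℝ) :
    ∑ k1 ∈ Finset.range N, (∑ s ∈ Finset.range (m + 1),
        ((m.choose s : ℝ)) * (if s ≤ k1 then (t1.choose (k1 - s) : ℝ) else 0)) * z1 ^ k1
    = (z1 + 1) ^ t1 * (z1 + 1) ^ m := by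
  simp_rw [Finset.sum_mul]
  rw [Finset.sum_comm]
  have step : ∀ s ∈ Finset.range (m + 1),
      ∑ k1 ∈ Finset.range N,
        (m.choose s : ℝ) * (if s ≤ k1 then (t1.choose (k1 - s) : ℝ) else 0) * z1 ^ k1
      = (m.choose s : ℝ) * z1 ^ s * (z1 + 1) ^ t1 := by
    intro s hs
    simp only [Finset.mem_range, Nat.lt_succ_iff] at hs
    have hsub : Finset.Ico s N ⊆ Finset.range N := by
      intro x hx; simp only [Finset.mem_Ico] at hx; simp [hx.2]
    rw [← Finset.sum_subset hsub]
    · rw [Finset.sum_Ico_eq_sum_range]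
      have : ∀ j ∈ Finset.range (N - s),
          (m.choose s : ℝ) * (if s ≤ s + j then (t1.choose (s + j - s) : ℝ) else 0)
            * z1 ^ (s + j)
          = (m.choose s : ℝ) * z1 ^ s * ((t1.choose j : ℝ) * z1 ^ j) := by
        intro j _
        rw [if_pos (Nat.le_add_right s j), Nat.add_sub_cancel_left, pow_add]
        ring
      rw [Finset.sum_congr rfl this, ← Finset.mul_sum,
        geom_ext t1 (N - s) (by omega) z1]
    · intro x hx hx2
      simp only [Finset.mem_range] at hx
      simp only [Finset.mem_Ico, not_and, not_lt] at hx2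
      have hxs : ¬ s ≤ x := fun hc => absurd hx (not_lt.2 (hx2 hc))
      rw [if_neg hxs]
      simp
  rw [Finset.sum_congr rfl step]
  have : ∀ s ∈ Finset.range (m + 1),
      (m.choose s : ℝ) * z1 ^ s * (z1 + 1) ^ t1
        = (z1 + 1) ^ t1 * ((m.choose s : ℝ) * z1 ^ s) := fun s _ => by ring
  rw [Finset.sum_congr rfl this, ← Finset.mul_sum, geom_ext m (m + 1) (Nat.lt_succ_self m)]

private lemma key_sum (t1 t2 N : ℕ) (hN : t1 + t2 < N) (z1 z2 : ℝ) :
    ∑ k ∈ Finset.range N ×ˢ Finset.range N,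
      ((t2.choose k.2 : ℝ) *
        ∑ s ∈ Finset.range (t2 - k.2 + 1),
          ((t2 - k.2).choose s : ℝ) * (if s ≤ k.1 then (t1.choose (k.1 - s) : ℝ) else 0))
        * z1 ^ k.1 * z2 ^ k.2
    = (z1 + 1) ^ t1 * (z1 + z2 + 1) ^ t2 := by
  rw [Finset.sum_product_right]
  have step : ∀ k2 ∈ Finset.range N,
      ∑ k1 ∈ Finset.range N,
        ((t2.choose k2 : ℝ) *
          ∑ s ∈ Finset.range (t2 - k2 + 1),
            ((t2 - k2).choose s : ℝ) * (if s ≤ k1 then (t1.choose (k1 - s) : ℝ) else 0))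
          * z1 ^ k1 * z2 ^ k2
      = (t2.choose k2 : ℝ) * z2 ^ k2 * ((z1 + 1) ^ t1 * (z1 + 1) ^ (t2 - k2)) := by
    intro k2 _
    have := ie_inner_sum t1 (t2 - k2) N (by omega) z1
    calc ∑ k1 ∈ Finset.range N,
        ((t2.choose k2 : ℝ) *
          ∑ s ∈ Finset.range (t2 - k2 + 1),
            ((t2 - k2).choose s : ℝ) * (if s ≤ k1 then (t1.choose (k1 - s) : ℝ) else 0))
          * z1 ^ k1 * z2 ^ k2
        = (t2.choose k2 : ℝ) * z2 ^ k2 *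
            ∑ k1 ∈ Finset.range N, (∑ s ∈ Finset.range (t2 - k2 + 1),
              ((t2 - k2).choose s : ℝ) * (if s ≤ k1 then (t1.choose (k1 - s) : ℝ) else 0))
              * z1 ^ k1 := by
          rw [Finset.mul_sum]; exact Finset.sum_congr rfl fun k1 _ => by ring
      _ = (t2.choose k2 : ℝ) * z2 ^ k2 * ((z1 + 1) ^ t1 * (z1 + 1) ^ (t2 - k2)) := by
          rw [this]
  rw [Finset.sum_congr rfl step]
  have hsub : Finset.range (t2 + 1) ⊆ Finset.range N := Finset.range_subset_range.2 (by omega)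
  rw [← Finset.sum_subset hsub]
  · have : ∀ k2 ∈ Finset.range (t2 + 1),
        (t2.choose k2 : ℝ) * z2 ^ k2 * ((z1 + 1) ^ t1 * (z1 + 1) ^ (t2 - k2))
        = (z1 + 1) ^ t1 * (z2 ^ k2 * (z1 + 1) ^ (t2 - k2) * (t2.choose k2 : ℝ)) :=
      fun k2 _ => by ring
    rw [Finset.sum_congr rfl this, ← Finset.mul_sum, ← add_pow]
    have : z2 + (z1 + 1) = z1 + z2 + 1 := by ring
    rw [this]
  · intro k2 _ hk2
    simp only [Finset.mem_range, not_lt, Nat.lt_succ_iff, not_le] at hk2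
    rw [Nat.choose_eq_zero_of_lt (by omega)]
    ring

/-- Two-variable inclusion-exclusion in generating-function form: if
`A(k1,k2) = ∑_{t1,t2} B(t1,t2) (t2 choose k2) ∑_{0 ≤ s ≤ t2-k2} (t2-k2 choose s)(t1 choose k1-s)`,
then `F_A(z1,z2) = F_B(z1+1, z1+z2+1)`. -/
theorem stmt7 (A B : (ℕ × ℕ) →₀ ℝ)
    (h : ∀ k1 k2 : ℕ, A (k1, k2) = B.sum (fun t c =>
        c * (t.2.choose k2 : ℝ) *
          ∑ s ∈ Finset.range (t.2 - k2 + 1),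
            ((t.2 - k2).choose s : ℝ) *
              (if s ≤ k1 then (t.1.choose (k1 - s) : ℝ) else 0))) :
    ∀ z1 z2 : ℝ,
      A.sum (fun k c => c * z1 ^ k.1 * z2 ^ k.2)
        = B.sum (fun t c => c * (z1 + 1) ^ t.1 * (z1 + z2 + 1) ^ t.2) := by
  intro z1 z2
  classical
  set N := (A.support.sup fun k => k.1 + k.2) + (B.support.sup fun t => t.1 + t.2) + 1
    with hNdef
  have hA : A.support ⊆ Finset.range N ×ˢ Finset.range N := by
    intro k hk
    have h1 : k.1 + k.2 ≤ A.support.sup fun k => k.1 + k.2 :=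
      Finset.le_sup (f := fun k : ℕ × ℕ => k.1 + k.2) hk
    simp only [Finset.mem_product, Finset.mem_range]
    omega
  have hBlt : ∀ t ∈ B.support, t.1 + t.2 < N := by
    intro t ht
    have h1 : t.1 + t.2 ≤ B.support.sup fun t => t.1 + t.2 :=
      Finset.le_sup (f := fun t : ℕ × ℕ => t.1 + t.2) ht
    omega
  rw [Finsupp.sum_of_support_subset A hA _ (fun i _ => by ring)]
  rw [Finsupp.sum]
  calc ∑ k ∈ Finset.range N ×ˢ Finset.range N, A k * z1 ^ k.1 * z2 ^ k.2
      = ∑ k ∈ Finset.range N ×ˢ Finset.range N, ∑ t ∈ B.support,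
          B t * ((t.2.choose k.2 : ℝ) *
            ∑ s ∈ Finset.range (t.2 - k.2 + 1),
              ((t.2 - k.2).choose s : ℝ) *
                (if s ≤ k.1 then (t.1.choose (k.1 - s) : ℝ) else 0))
            * z1 ^ k.1 * z2 ^ k.2 := by
        refine Finset.sum_congr rfl fun k _ => ?_
        have hk : A k = B.sum (fun t c =>
            c * (t.2.choose k.2 : ℝ) *
              ∑ s ∈ Finset.range (t.2 - k.2 + 1),
                ((t.2 - k.2).choose s : ℝ) *
                  (if s ≤ k.1 then (t.1.choose (k.1 - s) : ℝ) else 0)) := by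
          rw [← h k.1 k.2]
        rw [hk, Finsupp.sum, Finset.sum_mul, Finset.sum_mul]
        exact Finset.sum_congr rfl fun t _ => by ring
    _ = ∑ t ∈ B.support, B t * (z1 + 1) ^ t.1 * (z1 + z2 + 1) ^ t.2 := by
        rw [Finset.sum_comm]
        refine Finset.sum_congr rfl fun t ht => ?_
        have hfac : ∀ k ∈ Finset.range N ×ˢ Finset.range N,
            B t * ((t.2.choose k.2 : ℝ) *
              ∑ s ∈ Finset.range (t.2 - k.2 + 1),
                ((t.2 - k.2).choose s : ℝ) *
                  (if s ≤ k.1 then (t.1.choose (k.1 - s) : ℝ) else 0))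
              * z1 ^ k.1 * z2 ^ k.2
            = B t * (((t.2.choose k.2 : ℝ) *
                ∑ s ∈ Finset.range (t.2 - k.2 + 1),
                  ((t.2 - k.2).choose s : ℝ) *
                    (if s ≤ k.1 then (t.1.choose (k.1 - s) : ℝ) else 0))
                * z1 ^ k.1 * z2 ^ k.2) := fun k _ => by ring
        rw [Finset.sum_congr rfl hfac, ← Finset.mul_sum,
          key_sum t.1 t.2 N (hBlt t ht) z1 z2]
        ring
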